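/- Let R be a nonnegative k×k matrix with 0 < ρ(R) < 1 and suppose π_q = π₁ R^{q-1} with π₁ a strictly positive row vector and R primitive (irreducible aperiodic nonnegative). Then lim_{τ→∞} (1/τ) log Pr(Q ≥ τ) = log ρ(R), where Pr(Q ≥ τ) = Σ_{q≥⌈τ⌉} π_q · 1. -/

import Mathlib

open Matrix Filter
attribute [local instance] Matrix.linftyOpNormedRing Matrix.linftyOpNormedAlgebra

namespace TailDecay

lemma entry_norm_le {k : ℕ} (A : Matrix (Fin k) (Fin k) ℂ) (i j : Fin k) : ‖A i j‖ ≤ ‖A‖ := by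
  have h1 : ‖A i j‖₊ ≤ ∑ j', ‖A i j'‖₊ :=
    Finset.single_le_sum (f := fun j' => ‖A i j'‖₊) (fun _ _ => zero_le) (Finset.mem_univ j)
  have h2 : (∑ j', ‖A i j'‖₊) ≤ ‖A‖₊ := by
    rw [Matrix.linfty_opNNNorm_def]; exact Finset.le_sup (f := fun i => ∑ j', ‖A i j'‖₊) (Finset.mem_univ i)
  exact_mod_cast h1.trans h2

lemma norm_le_total {k : ℕ} (A : Matrix (Fin k) (Fin k) ℂ) : ‖A‖ ≤ ∑ i, ∑ j, ‖A i j‖ := by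
  have h : ‖A‖₊ ≤ ∑ i, ∑ j, ‖A i j‖₊ := by
    rw [Matrix.linfty_opNNNorm_def]
    exact Finset.sup_le fun i _ =>
      Finset.single_le_sum (f := fun i => ∑ j, ‖A i j‖₊) (fun _ _ => zero_le) (Finset.mem_univ i)
  have := NNReal.coe_le_coe.2 h
  push_cast at this
  exact this

lemma pow_entry_nonneg {k : ℕ} (R : Matrix (Fin k) (Fin k) ℝ) (h : ∀ i j, 0 ≤ R i j)
    (m : ℕ) (i j : Fin k) : 0 ≤ (R ^ m) i j := by
  induction m generalizing i j with
  | zero => by_cases hij : i = j <;> simp [pow_zero, Matrix.one_apply, hij]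
  | succ n ih =>
    rw [pow_succ, Matrix.mul_apply]
    exact Finset.sum_nonneg fun l _ => mul_nonneg (ih i l) (h l j)

lemma map_pow_entry_norm {k : ℕ} (R : Matrix (Fin k) (Fin k) ℝ) (h : ∀ i j, 0 ≤ R i j)
    (m : ℕ) (i j : Fin k) : ‖((R.map (algebraMap ℝ ℂ)) ^ m) i j‖ = (R ^ m) i j := by
  rw [show (R.map (algebraMap ℝ ℂ)) ^ m = (R ^ m).map (algebraMap ℝ ℂ) from by
    simpa using (map_pow ((algebraMap ℝ ℂ).mapMatrix) R m).symm]
  simp [Matrix.map_apply, Complex.norm_real, abs_of_nonneg (pow_entry_nonneg R h m i j)]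

lemma lower_total {k : ℕ} (hk : 0 < k) (R : Matrix (Fin k) (Fin k) ℝ)
    (hRnonneg : ∀ i j, 0 ≤ R i j) (r : ℝ)
    (hrmem : ∃ μ ∈ spectrum ℂ (R.map (algebraMap ℝ ℂ)), ‖μ‖ = r) (m : ℕ) :
    r ^ m ≤ ∑ i, ∑ j, (R ^ m) i j := by
  haveI : Nonempty (Fin k) := ⟨⟨0, hk⟩⟩
  obtain ⟨μ, hμ, hμr⟩ := hrmem
  have h1 : μ ^ m ∈ spectrum ℂ ((R.map (algebraMap ℝ ℂ)) ^ m) :=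
    spectrum.pow_image_subset _ m ⟨μ, hμ, rfl⟩
  have h2 : ‖μ ^ m‖ ≤ ‖(R.map (algebraMap ℝ ℂ)) ^ m‖ := spectrum.norm_le_norm_of_mem h1
  rw [norm_pow, hμr] at h2
  refine h2.trans ((norm_le_total _).trans ?_)
  apply le_of_eq
  exact Finset.sum_congr rfl fun i _ => Finset.sum_congr rfl fun j _ =>
    map_pow_entry_norm R hRnonneg m i j


lemma spectralRadius_eq {k : ℕ} (R : Matrix (Fin k) (Fin k) ℝ) (r : ℝ) (hr0 : 0 < r)
    (hrub : ∀ μ ∈ spectrum ℂ (R.map (algebraMap ℝ ℂ)), ‖μ‖ ≤ r)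
    (hrmem : ∃ μ ∈ spectrum ℂ (R.map (algebraMap ℝ ℂ)), ‖μ‖ = r) :
    spectralRadius ℂ (R.map (algebraMap ℝ ℂ)) = ENNReal.ofReal r := by
  apply le_antisymm
  · rw [spectralRadius]
    refine iSup₂_le fun μ hμ => ?_
    rw [← show ENNReal.ofReal ‖μ‖ = ‖μ‖₊ from ofReal_norm μ]
    exact ENNReal.ofReal_le_ofReal (hrub μ hμ)
  · obtain ⟨μ, hμ, hμr⟩ := hrmem
    rw [spectralRadius, ← hμr]
    exact le_iSup₂_of_le μ hμ (ofReal_norm μ : ENNReal.ofReal ‖μ‖ = ‖μ‖₊).le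

lemma eventually_entry_le {k : ℕ} (hk : 0 < k) (R : Matrix (Fin k) (Fin k) ℝ)
    (hRnonneg : ∀ i j, 0 ≤ R i j) (r : ℝ) (hr0 : 0 < r)
    (hrub : ∀ μ ∈ spectrum ℂ (R.map (algebraMap ℝ ℂ)), ‖μ‖ ≤ r)
    (hrmem : ∃ μ ∈ spectrum ℂ (R.map (algebraMap ℝ ℂ)), ‖μ‖ = r)
    {s : ℝ} (hs : r < s) :
    ∀ᶠ m in atTop, ∀ i j, (R ^ m) i j ≤ s ^ m := by
  haveI : Nonempty (Fin k) := ⟨⟨0, hk⟩⟩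
  set A := R.map (algebraMap ℝ ℂ) with hA
  have hG := spectrum.pow_nnnorm_pow_one_div_tendsto_nhds_spectralRadius A
  rw [spectralRadius_eq R r hr0 hrub hrmem] at hG
  have hlt : ENNReal.ofReal r < ENNReal.ofReal s :=
    (ENNReal.ofReal_lt_ofReal_iff (hr0.trans hs)).2 hs
  have hev : ∀ᶠ m : ℕ in atTop, (‖A ^ m‖₊ : ENNReal) ^ (1 / (m : ℝ)) < ENNReal.ofReal s :=
    hG.eventually_lt_const hlt
  filter_upwards [hev, eventually_ge_atTop 1] with m hm hm1 i j
  have hmne : ((m : ℝ)) ≠ 0 := Nat.cast_ne_zero.2 (Nat.one_le_iff_ne_zero.1 hm1)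
  have hx : (‖A ^ m‖₊ : ENNReal) ≤ (ENNReal.ofReal s) ^ m := by
    have h2 := ENNReal.rpow_le_rpow hm.le (Nat.cast_nonneg m : (0:ℝ) ≤ (m:ℝ))
    rwa [← ENNReal.rpow_mul, one_div, inv_mul_cancel₀ hmne, ENNReal.rpow_one,
      ENNReal.rpow_natCast] at h2
  have hs0 : (0:ℝ) ≤ s := (hr0.trans hs).le
  rw [← ENNReal.ofReal_pow hs0, ← show ENNReal.ofReal ‖A ^ m‖ = ‖A ^ m‖₊ from ofReal_norm (A ^ m),
    ENNReal.ofReal_le_ofReal_iff (by positivity)] at hx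
  calc (R ^ m) i j = ‖(A ^ m) i j‖ := (map_pow_entry_norm R hRnonneg m i j).symm
    _ ≤ ‖A ^ m‖ := entry_norm_le _ i j
    _ ≤ s ^ m := hx


variable {k : ℕ}

noncomputable def vq (R : Matrix (Fin k) (Fin k) ℝ) (π₁ : Fin k → ℝ) (q : ℕ) : ℝ :=
  (π₁ ᵥ* R ^ (q - 1)) ⬝ᵥ (fun _ => 1)

noncomputable def tailSum (R : Matrix (Fin k) (Fin k) ℝ) (π₁ : Fin k → ℝ) (m : ℕ) : ℝ :=
  ∑' q : ℕ, if 1 ≤ q ∧ m ≤ q then vq R π₁ q else 0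

lemma vq_eq (R : Matrix (Fin k) (Fin k) ℝ) (π₁ : Fin k → ℝ) (q : ℕ) :
    vq R π₁ q = ∑ j, ∑ i, π₁ i * (R ^ (q - 1)) i j := by
  simp [vq, Matrix.vecMul, dotProduct, mul_one]

lemma vq_nonneg (R : Matrix (Fin k) (Fin k) ℝ) (hR : ∀ i j, 0 ≤ R i j)
    {π₁ : Fin k → ℝ} (hπ : ∀ i, 0 ≤ π₁ i) (q : ℕ) : 0 ≤ vq R π₁ q := by
  rw [vq_eq]
  exact Finset.sum_nonneg fun j _ => Finset.sum_nonneg fun i _ =>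
    mul_nonneg (hπ i) (pow_entry_nonneg R hR _ i j)

lemma vq_le (R : Matrix (Fin k) (Fin k) ℝ)
    {π₁ : Fin k → ℝ} (hπ : ∀ i, 0 ≤ π₁ i) {q : ℕ} {B : ℝ}
    (hB : ∀ i j, (R ^ (q - 1)) i j ≤ B) :
    vq R π₁ q ≤ (k : ℝ) * (∑ i, π₁ i) * B := by
  rw [vq_eq]
  calc ∑ j, ∑ i, π₁ i * (R ^ (q - 1)) i j ≤ ∑ _j : Fin k, ∑ i, π₁ i * B :=
        Finset.sum_le_sum fun j _ => Finset.sum_le_sum fun i _ =>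
          mul_le_mul_of_nonneg_left (hB i j) (hπ i)
    _ = (k : ℝ) * (∑ i, π₁ i) * B := by
        simp [← Finset.sum_mul, Finset.sum_const, Finset.card_univ]
        ring

lemma vq_ge (R : Matrix (Fin k) (Fin k) ℝ) (hR : ∀ i j, 0 ≤ R i j)
    {π₁ : Fin k → ℝ} {c : ℝ} (hc : ∀ i, c ≤ π₁ i) (q : ℕ) :
    c * (∑ i, ∑ j, (R ^ (q - 1)) i j) ≤ vq R π₁ q := by
  rw [vq_eq, Finset.sum_comm, Finset.mul_sum]
  exact Finset.sum_le_sum fun j _ => by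
    rw [Finset.mul_sum]
    exact Finset.sum_le_sum fun i _ =>
      mul_le_mul_of_nonneg_right (hc _) (pow_entry_nonneg R hR _ _ _)

lemma vq_summable (R : Matrix (Fin k) (Fin k) ℝ) (hR : ∀ i j, 0 ≤ R i j)
    {π₁ : Fin k → ℝ} (hπ : ∀ i, 0 ≤ π₁ i) {s : ℝ} {N : ℕ} (hs0 : 0 < s) (hs1 : s < 1)
    (hent : ∀ m, N ≤ m → ∀ i j, (R ^ m) i j ≤ s ^ m) :
    Summable (vq R π₁) := by
  rw [← summable_nat_add_iff (N + 1)]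
  refine Summable.of_nonneg_of_le (fun n => vq_nonneg R hR hπ _) (fun n => ?_)
    ((summable_geometric_of_lt_one hs0.le hs1).mul_left ((k : ℝ) * (∑ i, π₁ i) * s ^ N))
  have hidx : n + (N + 1) - 1 = n + N := by omega
  have h1 : vq R π₁ (n + (N + 1)) ≤ (k : ℝ) * (∑ i, π₁ i) * s ^ (n + N) := by
    refine vq_le R hπ fun i j => ?_
    rw [hidx]
    exact hent (n + N) (by omega) i j
  calc vq R π₁ (n + (N + 1)) ≤ (k : ℝ) * (∑ i, π₁ i) * s ^ (n + N) := h1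
    _ = (k : ℝ) * (∑ i, π₁ i) * s ^ N * s ^ n := by rw [pow_add]; ring

lemma tail_summand_summable (R : Matrix (Fin k) (Fin k) ℝ) (hR : ∀ i j, 0 ≤ R i j)
    {π₁ : Fin k → ℝ} (hπ : ∀ i, 0 ≤ π₁ i) (hv : Summable (vq R π₁)) (m : ℕ) :
    Summable (fun q => if 1 ≤ q ∧ m ≤ q then vq R π₁ q else 0) := by
  refine Summable.of_nonneg_of_le (fun q => ?_) (fun q => ?_) hv
  · split
    · exact vq_nonneg R hR hπ q
    · exact le_refl 0
  · split
    · exact le_refl _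
    · exact vq_nonneg R hR hπ q

lemma tailSum_lower (R : Matrix (Fin k) (Fin k) ℝ) (hR : ∀ i j, 0 ≤ R i j)
    {π₁ : Fin k → ℝ} (hπ : ∀ i, 0 ≤ π₁ i) {c : ℝ} (hc : ∀ i, c ≤ π₁ i) (hc0 : 0 ≤ c)
    {m : ℕ} (hm : 1 ≤ m) {r : ℝ} (hr0 : 0 ≤ r)
    (hrm : r ^ (m - 1) ≤ ∑ i, ∑ j, (R ^ (m - 1)) i j)
    (hsum : Summable (fun q => if 1 ≤ q ∧ m ≤ q then vq R π₁ q else 0)) :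
    c * r ^ (m - 1) ≤ tailSum R π₁ m := by
  have h1 := Summable.le_tsum hsum m (fun q _ => by
    split
    · exact vq_nonneg R hR hπ q
    · exact le_refl 0)
  rw [if_pos ⟨hm, le_refl m⟩] at h1
  exact (mul_le_mul_of_nonneg_left hrm hc0).trans ((vq_ge R hR hc m).trans h1)

lemma tailSum_upper (R : Matrix (Fin k) (Fin k) ℝ) (hR : ∀ i j, 0 ≤ R i j)
    {π₁ : Fin k → ℝ} (hπ : ∀ i, 0 ≤ π₁ i) {s : ℝ} (hs0 : 0 < s) (hs1 : s < 1)
    {N m : ℕ} (hent : ∀ m', N ≤ m' → ∀ i j, (R ^ m') i j ≤ s ^ m') (hm : N + 1 ≤ m) :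
    tailSum R π₁ m ≤ ((k : ℝ) * (∑ i, π₁ i) * (1 - s)⁻¹) * s ^ (m - 1) := by
  set D : ℝ := (k : ℝ) * (∑ i, π₁ i) with hD
  have hD0 : 0 ≤ D := mul_nonneg (Nat.cast_nonneg k) (Finset.sum_nonneg fun i _ => hπ i)
  have hm1 : 1 ≤ m := by omega
  have hgle : ∀ q, (if 1 ≤ q ∧ m ≤ q then vq R π₁ q else 0)
      ≤ (if m ≤ q then D * s ^ (q - 1) else 0) := by
    intro q
    by_cases hq : 1 ≤ q ∧ m ≤ q
    · rw [if_pos hq, if_pos hq.2]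
      exact vq_le R hπ fun i j => hent (q - 1) (by omega) i j
    · rw [if_neg hq]
      split
      · exact mul_nonneg hD0 (pow_nonneg hs0.le _)
      · exact le_refl 0
  have hh : Summable (fun q => if m ≤ q then D * s ^ (q - 1) else 0) := by
    refine Summable.of_nonneg_of_le (fun q => ?_) (fun q => ?_)
      ((summable_geometric_of_lt_one hs0.le hs1).mul_left (D / s))
    · split
      · exact mul_nonneg hD0 (pow_nonneg hs0.le _)
      · exact le_refl 0
    · split
      · rename_i hq
        have he : D / s * s ^ q = D * s ^ (q - 1) := by
          nth_rewrite 1 [show q = (q - 1) + 1 from by omega]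
          rw [pow_succ]
          field_simp
        rw [he]
      · exact mul_nonneg (div_nonneg hD0 hs0.le) (pow_nonneg hs0.le _)
  have hg : Summable (fun q => if 1 ≤ q ∧ m ≤ q then vq R π₁ q else 0) := by
    refine Summable.of_nonneg_of_le (fun q => ?_) hgle hh
    split
    · exact vq_nonneg R hR hπ q
    · exact le_refl 0
  have step1 : tailSum R π₁ m ≤ ∑' q, (if m ≤ q then D * s ^ (q - 1) else 0) :=
    Summable.tsum_le_tsum hgle hg hh
  have step2 : (∑' q, (if m ≤ q then D * s ^ (q - 1) else 0))
      = D * s ^ (m - 1) * (1 - s)⁻¹ := by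
    rw [← Summable.sum_add_tsum_nat_add m hh]
    have hzero : (∑ i ∈ Finset.range m, if m ≤ i then D * s ^ (i - 1) else 0) = 0 :=
      Finset.sum_eq_zero fun i hi => if_neg (by simp at hi; omega)
    rw [hzero, zero_add]
    have hterm : ∀ n : ℕ, (if m ≤ n + m then D * s ^ (n + m - 1) else 0)
        = D * s ^ (m - 1) * s ^ n := by
      intro n
      rw [if_pos (Nat.le_add_left m n)]
      have hnm : n + m - 1 = (m - 1) + n := by omega
      rw [hnm, pow_add]
      ring
    calc (∑' n : ℕ, if m ≤ n + m then D * s ^ (n + m - 1) else 0)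
        = ∑' n : ℕ, D * s ^ (m - 1) * s ^ n := by
          congr 1
          funext n
          exact hterm n
      _ = D * s ^ (m - 1) * (1 - s)⁻¹ := by
          rw [tsum_mul_left, tsum_geometric_of_lt_one hs0.le hs1]
  calc tailSum R π₁ m ≤ D * s ^ (m - 1) * (1 - s)⁻¹ := step2 ▸ step1
    _ = (D * (1 - s)⁻¹) * s ^ (m - 1) := by ring

end TailDecay

open TailDecay in
/-- Let `R` be a nonnegative primitive `k×k` matrix whose spectral radius `r`
satisfies `0 < r < 1` (`r` bounds the norms of all complex eigenvalues and is
attained), and let `π₁` be a strictly positive row vector.  With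
`π_q = π₁ R^{q-1}` and `Pr(Q ≥ τ) = Σ_{q ≥ ⌈τ⌉} π_q · 1`, one has
`lim_{τ→∞} (1/τ) log Pr(Q ≥ τ) = log r`. -/
theorem tail_decay_rate (k : ℕ) (hk : 0 < k)
    (R : Matrix (Fin k) (Fin k) ℝ) (hRnonneg : ∀ i j, 0 ≤ R i j)
    (hprim : ∃ n, ∀ i j, 0 < (R ^ n) i j)
    (r : ℝ) (hr0 : 0 < r) (hr1 : r < 1)
    (hrub : ∀ μ ∈ spectrum ℂ (R.map (algebraMap ℝ ℂ)), ‖μ‖ ≤ r)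
    (hrmem : ∃ μ ∈ spectrum ℂ (R.map (algebraMap ℝ ℂ)), ‖μ‖ = r)
    (π₁ : Fin k → ℝ) (hπ : ∀ i, 0 < π₁ i) :
    Tendsto (fun τ : ℝ => (1 / τ) * Real.log
        (∑' q : ℕ, if 1 ≤ q ∧ (⌈τ⌉₊ : ℕ) ≤ q then (π₁ ᵥ* R ^ (q - 1)) ⬝ᵥ (fun _ => 1) else 0))
      atTop (nhds (Real.log r)) := by
  classical
  haveI : Nonempty (Fin k) := ⟨⟨0, hk⟩⟩
  show Tendsto (fun τ : ℝ => (1 / τ) * Real.log (tailSum R π₁ ⌈τ⌉₊)) atTop (nhds (Real.log r))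
  have hπ0 : ∀ i, 0 ≤ π₁ i := fun i => (hπ i).le
  -- the minimum of π₁
  set c : ℝ := Finset.univ.inf' Finset.univ_nonempty π₁ with hcdef
  have hc0 : 0 < c := (Finset.lt_inf'_iff _).2 fun i _ => hπ i
  have hcle : ∀ i, c ≤ π₁ i := fun i => Finset.inf'_le _ (Finset.mem_univ i)
  have hP0 : 0 < ∑ i, π₁ i := Finset.sum_pos (fun i _ => hπ i) Finset.univ_nonempty
  -- summability of vq
  have hrs₀ : r < (r + 1) / 2 := by linarith
  have hs₀0 : (0:ℝ) < (r + 1) / 2 := by linarith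
  have hs₀1 : (r + 1) / 2 < 1 := by linarith
  obtain ⟨N₀, hN₀⟩ := eventually_atTop.1
    (TailDecay.eventually_entry_le hk R hRnonneg r hr0 hrub hrmem hrs₀)
  have hvsum : Summable (TailDecay.vq R π₁) :=
    TailDecay.vq_summable R hRnonneg hπ0 hs₀0 hs₀1 hN₀
  have hgsum : ∀ m : ℕ, Summable (fun q => if 1 ≤ q ∧ m ≤ q then TailDecay.vq R π₁ q else 0) :=
    fun m => TailDecay.tail_summand_summable R hRnonneg hπ0 hvsum m
  have hlogr_neg : Real.log r < 0 := Real.log_neg hr0 hr1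
  -- the ε-argument
  rw [Metric.tendsto_nhds]
  intro ε hε
  set s : ℝ := min ((r + 1) / 2) (r * Real.exp (ε / 2)) with hsdef
  have hexp1 : 1 < Real.exp (ε / 2) := by
    have := Real.add_one_le_exp (ε / 2)
    linarith
  have hrs : r < s := lt_min (by linarith) (by nlinarith)
  have hs1 : s < 1 := lt_of_le_of_lt (min_le_left _ _) hs₀1
  have hs0 : 0 < s := hr0.trans hrs
  have hlogs_neg : Real.log s < 0 := Real.log_neg hs0 hs1
  have hlogs : Real.log s ≤ Real.log r + ε / 2 := by
    have h1 : s ≤ r * Real.exp (ε / 2) := min_le_right _ _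
    have h2 := Real.log_le_log hs0 h1
    rwa [Real.log_mul (ne_of_gt hr0) (Real.exp_ne_zero _), Real.log_exp] at h2
  obtain ⟨N, hN⟩ := eventually_atTop.1
    (TailDecay.eventually_entry_le hk R hRnonneg r hr0 hrub hrmem hrs)
  set C₂ : ℝ := (k : ℝ) * (∑ i, π₁ i) * (1 - s)⁻¹ with hC₂def
  have hC₂0 : 0 < C₂ := by
    apply mul_pos (mul_pos (by exact_mod_cast hk) hP0)
    rw [inv_pos]; linarith
  set K : ℝ := |Real.log c| + |Real.log C₂ - Real.log s| with hKdef
  have hK0 : 0 ≤ K := add_nonneg (abs_nonneg _) (abs_nonneg _)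
  have hKt : Tendsto (fun τ : ℝ => K / τ) atTop (nhds 0) :=
    Filter.Tendsto.div_atTop tendsto_const_nhds tendsto_id
  have hKev : ∀ᶠ τ : ℝ in atTop, K / τ < ε / 2 := hKt.eventually_lt_const (half_pos hε)
  filter_upwards [hKev, eventually_ge_atTop (1:ℝ), eventually_ge_atTop ((N:ℝ)+1)]
    with τ hKτ hτ1 hτN
  have hτ0 : (0:ℝ) < τ := lt_of_lt_of_le one_pos hτ1
  set m : ℕ := ⌈τ⌉₊ with hmdef
  have hm1 : 1 ≤ m := Nat.one_le_iff_ne_zero.2 (by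
    have : 0 < m := Nat.ceil_pos.2 hτ0
    omega)
  have hτm : τ ≤ (m:ℝ) := Nat.le_ceil τ
  have hmτ : (m:ℝ) ≤ τ + 1 := (Nat.ceil_lt_add_one hτ0.le).le
  have hmN : N + 1 ≤ m := by
    have h1 : ((N:ℝ) + 1) ≤ (m:ℝ) := hτN.trans hτm
    exact_mod_cast h1
  have hmr1 : ((m - 1 : ℕ) : ℝ) = (m : ℝ) - 1 :=
    Nat.cast_pred (by omega)
  -- bounds on the tail sum
  have hlow : c * r ^ (m - 1) ≤ TailDecay.tailSum R π₁ m :=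
    TailDecay.tailSum_lower R hRnonneg hπ0 hcle hc0.le hm1 hr0.le
      (TailDecay.lower_total hk R hRnonneg r hrmem (m - 1)) (hgsum m)
  have hup : TailDecay.tailSum R π₁ m ≤ C₂ * s ^ (m - 1) :=
    TailDecay.tailSum_upper R hRnonneg hπ0 hs0 hs1 hN hmN
  have hTpos : 0 < TailDecay.tailSum R π₁ m := lt_of_lt_of_le (by positivity) hlow
  -- bounds on the log
  have hL1 : Real.log c + ((m - 1 : ℕ) : ℝ) * Real.log r
      ≤ Real.log (TailDecay.tailSum R π₁ m) := by
    have h1 : Real.log (c * r ^ (m - 1)) ≤ Real.log (TailDecay.tailSum R π₁ m) :=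
      Real.log_le_log (by positivity) hlow
    rwa [Real.log_mul (ne_of_gt hc0) (by positivity), Real.log_pow] at h1
  have hL2 : Real.log (TailDecay.tailSum R π₁ m)
      ≤ Real.log C₂ + ((m - 1 : ℕ) : ℝ) * Real.log s := by
    have h1 : Real.log (TailDecay.tailSum R π₁ m) ≤ Real.log (C₂ * s ^ (m - 1)) :=
      Real.log_le_log hTpos hup
    rwa [Real.log_mul (ne_of_gt hC₂0) (by positivity), Real.log_pow] at h1
  -- convert to bounds in terms of τ
  have hmlb : τ - 1 ≤ ((m - 1 : ℕ) : ℝ) := by rw [hmr1]; linarith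
  have hmub : ((m - 1 : ℕ) : ℝ) ≤ τ := by rw [hmr1]; linarith
  have hlow2 : Real.log c + τ * Real.log r ≤ Real.log (TailDecay.tailSum R π₁ m) := by
    have := mul_le_mul_of_nonpos_right hmub hlogr_neg.le
    linarith
  have hup2 : Real.log (TailDecay.tailSum R π₁ m)
      ≤ Real.log C₂ + (τ - 1) * Real.log s := by
    have := mul_le_mul_of_nonpos_right hmlb hlogs_neg.le
    linarith
  -- divide by τ
  have hτinv : 0 < 1 / τ := by positivity
  have hflow : Real.log c / τ + Real.log r
      ≤ (1 / τ) * Real.log (TailDecay.tailSum R π₁ m) := by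
    have h1 := mul_le_mul_of_nonneg_left hlow2 hτinv.le
    have heq : (1 / τ) * (Real.log c + τ * Real.log r) = Real.log c / τ + Real.log r := by
      field_simp
    rw [heq] at h1
    exact h1
  have hfup : (1 / τ) * Real.log (TailDecay.tailSum R π₁ m)
      ≤ (Real.log C₂ - Real.log s) / τ + Real.log s := by
    have h1 := mul_le_mul_of_nonneg_left hup2 hτinv.le
    have heq : (1 / τ) * (Real.log C₂ + (τ - 1) * Real.log s)
        = (Real.log C₂ - Real.log s) / τ + Real.log s := by
      field_simp
      ring
    rw [heq] at h1
    exact h1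
  -- the error terms are small
  have habs1 : -(K / τ) ≤ Real.log c / τ := by
    have h1 : |Real.log c / τ| ≤ K / τ := by
      rw [abs_div, abs_of_pos hτ0]
      exact (div_le_div_iff_of_pos_right hτ0).2 (le_add_of_nonneg_right (abs_nonneg _))
    linarith [(abs_le.1 h1).1]
  have habs2 : (Real.log C₂ - Real.log s) / τ ≤ K / τ := by
    have h1 : |(Real.log C₂ - Real.log s) / τ| ≤ K / τ := by
      rw [abs_div, abs_of_pos hτ0]
      exact (div_le_div_iff_of_pos_right hτ0).2 (le_add_of_nonneg_left (abs_nonneg _))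
    linarith [(abs_le.1 h1).2]
  rw [Real.dist_eq, abs_sub_lt_iff]
  constructor
  · linarith
  · linarith
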